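/- arXiv:1610.06094 — 2 statements merged into one kernel-verified Lean document; each statement's English description precedes it below -/
import Mathlib

section
/- Let G₁, G₂ be integer-weighted graphs on n vertices diagonalized by the same normalized Hadamard H, with G₂ regular of degree d₂, and let w₁ be odd and w₂ even. Then the merge graph with Laplacian L₃ = [[w₁L₁ + w₂d₂I, −w₂A₂],[−w₂A₂, w₁L₁ + w₂d₂I]] has PST from vertex p to vertex q (1 ≤ p < q ≤ n) at time π/2 if and only if G₁ has PST from p to q at time π/2. -/
open Matrix

/-- Perfect state transfer at time π/2 for an integer Hamiltonian `L`. -/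
noncomputable def pstHalfPi {m : Type*} [Fintype m] [DecidableEq m]
    (L : Matrix m m ℤ) (j k : m) : Prop :=
  ‖(NormedSpace.exp ((Complex.I * ((Real.pi / 2 : ℝ) : ℂ)) •
        L.map (fun x => (x : ℂ)))) j k‖ = 1

lemma zpow_I_eq_of_dvd (a b : ℤ) (h : (4:ℤ) ∣ a - b) :
    Complex.I ^ a = Complex.I ^ b := by
  obtain ⟨c, hc⟩ := h
  have ha : a = b + 4 * c := by linarith
  have h4 : Complex.I ^ (4:ℤ) = 1 := by
    rw [show (4:ℤ) = (4:ℕ) from rfl, zpow_natCast, Complex.I_pow_four]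
  rw [ha, zpow_add₀ Complex.I_ne_zero, _root_.zpow_mul, h4, _root_.one_zpow, mul_one]

lemma exp_I_pi_div_two_int (k : ℤ) :
    Complex.exp ((Complex.I * ((Real.pi / 2 : ℝ) : ℂ)) * k) = Complex.I ^ k := by
  have h1 : Complex.exp (((Real.pi / 2 : ℝ) : ℂ) * Complex.I) = Complex.I := by
    rw [Complex.exp_mul_I, ← Complex.ofReal_cos, ← Complex.ofReal_sin]
    simp [Real.cos_pi_div_two, Real.sin_pi_div_two]
  calc Complex.exp ((Complex.I * ((Real.pi / 2 : ℝ) : ℂ)) * k)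
      = Complex.exp ((k : ℂ) * (((Real.pi / 2 : ℝ) : ℂ) * Complex.I)) := by ring_nf
    _ = Complex.exp (((Real.pi / 2 : ℝ) : ℂ) * Complex.I) ^ k := Complex.exp_int_mul _ k
    _ = Complex.I ^ k := by rw [h1]

lemma exp_hadamard {m : Type*} [Fintype m] [DecidableEq m] (N : ℕ) (hN : (N:ℂ) ≠ 0)
    (K : Matrix m m ℤ) (hK : K * Kᵀ = (N:ℤ) • 1)
    (L : Matrix m m ℤ) (Λ : m → ℤ)
    (hL : (N:ℤ) • L = K * Matrix.diagonal Λ * Kᵀ) :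
    NormedSpace.exp ((Complex.I * ((Real.pi / 2 : ℝ) : ℂ)) • L.map (fun x => (x:ℂ)))
      = (N:ℂ)⁻¹ • (K.map (fun x => (x:ℂ)) *
          Matrix.diagonal (fun ℓ => Complex.I ^ (Λ ℓ)) * (K.map (fun x => (x:ℂ)))ᵀ) := by
  set t : ℂ := Complex.I * ((Real.pi / 2 : ℝ) : ℂ) with ht
  set Kc : Matrix m m ℂ := K.map (fun x => (x:ℂ)) with hKc
  set Dc : Matrix m m ℂ := Matrix.diagonal (fun ℓ => (Λ ℓ : ℂ)) with hDc
  have hKcK : Kc * Kcᵀ = (N:ℂ) • 1 := by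
    ext i j
    have := congrArg (fun M : Matrix m m ℤ => ((M i j : ℤ) : ℂ)) hK
    simp only [Matrix.mul_apply, Matrix.smul_apply, Matrix.one_apply, smul_eq_mul] at this
    push_cast at this
    simpa [hKc, Matrix.mul_apply, Matrix.map_apply, Matrix.transpose_apply,
      Matrix.smul_apply, Matrix.one_apply, smul_eq_mul,
      apply_ite (fun z : ℤ => (z : ℂ))] using this
  have hrinv : Kc * ((N:ℂ)⁻¹ • Kcᵀ) = 1 := by
    rw [Matrix.mul_smul, hKcK, smul_smul, inv_mul_cancel₀ hN, one_smul]
  have hUnit : IsUnit Kc := (Matrix.isUnit_iff_isUnit_det _).mpr (Matrix.isUnit_det_of_right_inverse hrinv)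
  have hinv : Kc⁻¹ = (N:ℂ)⁻¹ • Kcᵀ := Matrix.inv_eq_right_inv hrinv
  have hLc' : (N:ℂ) • L.map (fun x => (x:ℂ)) = Kc * Dc * Kcᵀ := by
    ext i j
    have := congrArg (fun M : Matrix m m ℤ => ((M i j : ℤ) : ℂ)) hL
    simp only [Matrix.smul_apply, smul_eq_mul, Matrix.mul_apply, Matrix.mul_diagonal,
      Matrix.transpose_apply] at this
    push_cast at this
    simpa [hKc, hDc, Matrix.smul_apply, smul_eq_mul, Matrix.map_apply, Matrix.mul_apply,
      Matrix.mul_diagonal, Matrix.transpose_apply, Matrix.diagonal_apply,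
      apply_ite (fun z : ℤ => (z : ℂ))] using this
  have hLc : L.map (fun x => (x:ℂ)) = Kc * Dc * Kc⁻¹ := by
    rw [hinv, Matrix.mul_smul, ← hLc', smul_smul, inv_mul_cancel₀ hN, one_smul]
  have hdsc : Matrix.diagonal (fun ℓ => t * (Λ ℓ : ℂ)) = t • Dc := by
    rw [hDc, ← Matrix.diagonal_smul]
    rfl
  have key : t • L.map (fun x => (x:ℂ)) =
      Kc * Matrix.diagonal (fun ℓ => t * (Λ ℓ : ℂ)) * Kc⁻¹ := by
    rw [hLc, hdsc, Matrix.mul_smul, Matrix.smul_mul]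
  rw [key, Matrix.exp_conj Kc _ hUnit, Matrix.exp_diagonal, hinv]
  have hdiag : NormedSpace.exp (fun ℓ => t * (Λ ℓ : ℂ)) =
      fun ℓ => Complex.I ^ (Λ ℓ) := by
    funext ℓ
    rw [Pi.coe_exp, ← Complex.exp_eq_exp_ℂ]
    exact exp_I_pi_div_two_int (Λ ℓ)
  rw [hdiag, Matrix.mul_smul]

theorem merge_pst_w1_odd_w2_even (n : ℕ) [NeZero n]
    (H : Matrix (Fin n) (Fin n) ℤ)
    (hent : ∀ u v, H u v = 1 ∨ H u v = -1)
    (hH : H * Hᵀ = (n : ℤ) • 1)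
    (hrow : ∀ v, H 0 v = 1) (hcol : ∀ u, H u 0 = 1)
    (L₁ A₂ : Matrix (Fin n) (Fin n) ℤ) (d₂ w₁ w₂ : ℤ)
    (Λ₁ Λ₂ : Fin n → ℤ)
    (hL₁ : (n : ℤ) • L₁ = H * Matrix.diagonal Λ₁ * Hᵀ)
    (hL₂ : (n : ℤ) • (d₂ • (1 : Matrix (Fin n) (Fin n) ℤ) - A₂) =
      H * Matrix.diagonal Λ₂ * Hᵀ)
    (heven₁ : ∀ ℓ, Even (Λ₁ ℓ)) (heven₂ : ∀ ℓ, Even (Λ₂ ℓ))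
    (hw₁ : Odd w₁) (hw₂ : Even w₂)
    (L₃ : Matrix (Fin n ⊕ Fin n) (Fin n ⊕ Fin n) ℤ)
    (hL₃ : L₃ = Matrix.fromBlocks
      (w₁ • L₁ + (w₂ * d₂) • (1 : Matrix (Fin n) (Fin n) ℤ)) (-(w₂ • A₂))
      (-(w₂ • A₂)) (w₁ • L₁ + (w₂ * d₂) • (1 : Matrix (Fin n) (Fin n) ℤ)))
    (p q : Fin n) (hpq : p < q) :
    pstHalfPi L₃ (Sum.inl p) (Sum.inl q) ↔ pstHalfPi L₁ p q := by
  have hn0 : (n:ℂ) ≠ 0 := Nat.cast_ne_zero.mpr (NeZero.ne n)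
  have h2n0 : ((2*n:ℕ):ℂ) ≠ 0 := by
    push_cast
    exact mul_ne_zero two_ne_zero hn0
  set a : Fin n → ℤ := fun ℓ => w₁ * Λ₁ ℓ + w₂ * Λ₂ ℓ with hadef
  set b : Fin n → ℤ := fun ℓ => w₁ * Λ₁ ℓ - w₂ * Λ₂ ℓ + 2 * w₂ * d₂ with hbdef
  set K : Matrix (Fin n ⊕ Fin n) (Fin n ⊕ Fin n) ℤ := Matrix.fromBlocks H H H (-H)
    with hKdef
  have hKK : K * Kᵀ = ((2*n:ℕ):ℤ) • 1 := by
    have h11 : H * Hᵀ + H * Hᵀ = ((2*n:ℕ):ℤ) • 1 := by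
      rw [hH]; push_cast; module
    have h12 : H * Hᵀ + H * (-H)ᵀ = 0 := by
      rw [Matrix.transpose_neg, Matrix.mul_neg, hH]; simp
    have h21 : H * Hᵀ + (-H) * Hᵀ = 0 := by
      rw [Matrix.neg_mul, hH]; simp
    have h22 : H * Hᵀ + (-H) * (-H)ᵀ = ((2*n:ℕ):ℤ) • 1 := by
      rw [Matrix.transpose_neg, Matrix.mul_neg, Matrix.neg_mul, neg_neg, hH]
      push_cast; module
    have hone : ((2*n:ℕ):ℤ) • (1 : Matrix (Fin n ⊕ Fin n) (Fin n ⊕ Fin n) ℤ) =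
        Matrix.fromBlocks (((2*n:ℕ):ℤ) • 1) 0 0 (((2*n:ℕ):ℤ) • 1) := by
      rw [← Matrix.fromBlocks_one, Matrix.fromBlocks_smul, smul_zero]
    rw [hKdef, Matrix.fromBlocks_transpose, Matrix.fromBlocks_multiply,
      h11, h12, h21, h22]
    exact hone.symm
  have hdiaga : Matrix.diagonal a = w₁ • Matrix.diagonal Λ₁ + w₂ • Matrix.diagonal Λ₂ := by
    ext i j
    simp only [Matrix.add_apply, Matrix.smul_apply, Matrix.diagonal_apply,
      smul_eq_mul, hadef]
    split <;> simp
  have hdiagb : Matrix.diagonal b = w₁ • Matrix.diagonal Λ₁ - w₂ • Matrix.diagonal Λ₂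
      + (2*w₂*d₂) • (1 : Matrix (Fin n) (Fin n) ℤ) := by
    ext i j
    simp only [Matrix.add_apply, Matrix.sub_apply, Matrix.smul_apply,
      Matrix.diagonal_apply, Matrix.one_apply, smul_eq_mul, hbdef]
    split <;> simp
  have hXa : H * Matrix.diagonal a * Hᵀ =
      (n:ℤ) • (w₁ • L₁ + w₂ • (d₂ • (1 : Matrix (Fin n) (Fin n) ℤ) - A₂)) := by
    rw [hdiaga, Matrix.mul_add, Matrix.add_mul, Matrix.mul_smul, Matrix.smul_mul,
      Matrix.mul_smul, Matrix.smul_mul, ← hL₁, ← hL₂]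
    module
  have hXb : H * Matrix.diagonal b * Hᵀ =
      (n:ℤ) • (w₁ • L₁ - w₂ • (d₂ • (1 : Matrix (Fin n) (Fin n) ℤ) - A₂)
        + (2*w₂*d₂) • (1 : Matrix (Fin n) (Fin n) ℤ)) := by
    rw [hdiagb, Matrix.mul_add, Matrix.add_mul, Matrix.mul_sub, Matrix.sub_mul,
      Matrix.mul_smul, Matrix.smul_mul, Matrix.mul_smul, Matrix.smul_mul,
      Matrix.mul_smul, Matrix.smul_mul, Matrix.mul_one, hH, ← hL₁, ← hL₂]
    module
  have hKL : ((2*n:ℕ):ℤ) • L₃ = K * Matrix.diagonal (Sum.elim a b) * Kᵀ := by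
    rw [hKdef, ← Matrix.fromBlocks_diagonal, Matrix.fromBlocks_transpose,
      Matrix.fromBlocks_multiply, Matrix.fromBlocks_multiply, hL₃,
      Matrix.fromBlocks_smul]
    simp only [Matrix.mul_zero, Matrix.zero_mul, add_zero, zero_add,
      Matrix.neg_mul, Matrix.mul_neg, Matrix.transpose_neg, neg_neg]
    have e1 : ((2*n:ℕ):ℤ) • (w₁ • L₁ + (w₂ * d₂) • (1 : Matrix (Fin n) (Fin n) ℤ)) =
        H * Matrix.diagonal a * Hᵀ + H * Matrix.diagonal b * Hᵀ := by
      rw [hXa, hXb]; push_cast; module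
    have e2 : ((2*n:ℕ):ℤ) • -(w₂ • A₂) =
        H * Matrix.diagonal a * Hᵀ + -(H * Matrix.diagonal b * Hᵀ) := by
      rw [hXa, hXb]; push_cast; module
    rw [e1, e2]
  have hIa : ∀ ℓ, Complex.I ^ (a ℓ) = Complex.I ^ (Λ₁ ℓ) := by
    intro ℓ
    apply zpow_I_eq_of_dvd
    obtain ⟨k, hk⟩ := hw₁
    obtain ⟨u, hu⟩ := heven₁ ℓ
    obtain ⟨v, hv⟩ := hw₂
    obtain ⟨s, hs⟩ := heven₂ ℓ
    exact ⟨k*u + v*s, by simp only [hadef]; rw [hk, hu, hv, hs]; ring⟩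
  have hIb : ∀ ℓ, Complex.I ^ (b ℓ) = Complex.I ^ (Λ₁ ℓ) := by
    intro ℓ
    apply zpow_I_eq_of_dvd
    obtain ⟨k, hk⟩ := hw₁
    obtain ⟨u, hu⟩ := heven₁ ℓ
    obtain ⟨v, hv⟩ := hw₂
    obtain ⟨s, hs⟩ := heven₂ ℓ
    exact ⟨k*u - v*s + v*d₂, by simp only [hbdef]; rw [hk, hu, hv, hs]; ring⟩
  have E₃ := exp_hadamard (2*n) h2n0 K hKK L₃ (Sum.elim a b) hKL
  have E₁ := exp_hadamard n hn0 H hH L₁ Λ₁ hL₁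
  have hentry :
      (NormedSpace.exp ((Complex.I * ((Real.pi / 2 : ℝ) : ℂ)) •
        L₃.map (fun x => (x : ℂ)))) (Sum.inl p) (Sum.inl q) =
      (NormedSpace.exp ((Complex.I * ((Real.pi / 2 : ℝ) : ℂ)) •
        L₁.map (fun x => (x : ℂ)))) p q := by
    rw [E₃, E₁]
    simp only [Matrix.smul_apply, Matrix.mul_apply, Matrix.mul_diagonal,
      Matrix.transpose_apply, Matrix.map_apply, smul_eq_mul,
      Fintype.sum_sum_type, Sum.elim_inl, Sum.elim_inr, hKdef,
      Matrix.fromBlocks_apply₁₁, Matrix.fromBlocks_apply₁₂,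
      Matrix.diagonal_apply, Sum.inl.injEq, Sum.inr.injEq, mul_ite, mul_zero,
      ite_mul, zero_mul, Finset.sum_ite_eq, Finset.mem_univ, if_true,
      reduceCtorEq, if_false, Finset.sum_ite_eq']
    have hsum1 : (∑ ℓ, ((H p ℓ : ℂ)) * Complex.I ^ (a ℓ) * ((H q ℓ : ℂ))) =
        ∑ ℓ, ((H p ℓ : ℂ)) * Complex.I ^ (Λ₁ ℓ) * ((H q ℓ : ℂ)) := by
      exact Finset.sum_congr rfl fun ℓ _ => by rw [hIa ℓ]
    have hsum2 : (∑ ℓ, ((H p ℓ : ℂ)) * Complex.I ^ (b ℓ) * ((H q ℓ : ℂ))) =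
        ∑ ℓ, ((H p ℓ : ℂ)) * Complex.I ^ (Λ₁ ℓ) * ((H q ℓ : ℂ)) := by
      exact Finset.sum_congr rfl fun ℓ _ => by rw [hIb ℓ]
    rw [hsum1, hsum2]
    push_cast
    field_simp
    ring
  unfold pstHalfPi
  rw [hentry]
end

section
/- Let G₁, G₂ be integer-weighted graphs on n vertices diagonalized by the same normalized Hadamard H, with G₂ regular of degree d₂ odd, and suppose w₁, w₂ are both odd integers. Then the merge graph with Laplacian L₃ = [[w₁L₁ + w₂d₂I, −w₂A₂],[−w₂A₂, w₁L₁ + w₂d₂I]] has PST from vertex p ∈ {1,…,n} to vertex q+n (q ∈ {1,…,n}) at time π/2 if and only if the graph with Laplacian L₁ + L₂ has PST from p to q at time π/2. -/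
open Matrix

open NormedSpace

private lemma negOnePow_even' {s t : ℤ} (h : Even (s - t)) : (-1:ℂ)^s = (-1:ℂ)^t := by
  have hs : s = t + (s - t) := by ring
  rw [hs, zpow_add₀ (by norm_num : (-1:ℂ) ≠ 0), h.neg_one_zpow, mul_one]

private lemma negOnePow_odd' {s t : ℤ} (h : Odd (s - t)) : (-1:ℂ)^s = -(-1:ℂ)^t := by
  have hs : s = t + (s - t) := by ring
  rw [hs, zpow_add₀ (by norm_num : (-1:ℂ) ≠ 0), h.neg_one_zpow, mul_neg_one]

private lemma expHalfPi' (s : ℤ) :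
    Complex.exp ((Complex.I * ((Real.pi / 2 : ℝ) : ℂ)) * ((2 * s : ℤ) : ℂ)) = (-1:ℂ) ^ s := by
  have h : (Complex.I * ((Real.pi / 2 : ℝ) : ℂ)) * ((2 * s : ℤ) : ℂ)
      = (s : ℂ) * ((Real.pi : ℂ) * Complex.I) := by push_cast; ring
  rw [h, Complex.exp_int_mul, Complex.exp_pi_mul_I]

private lemma entryExpAux {m : Type*} [Fintype m] [DecidableEq m] (N : ℕ) (hN : (N:ℂ) ≠ 0)
    (Hm : Matrix m m ℂ) (hHm : Hm * Hmᵀ = (N:ℂ) • 1)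
    (M : Matrix m m ℂ) (Λ : m → ℂ) (hM : (N:ℂ) • M = Hm * Matrix.diagonal Λ * Hmᵀ)
    (c : ℂ) (p q : m) :
    (exp (c • M)) p q = (N:ℂ)⁻¹ * ∑ ℓ, Hm p ℓ * Hm q ℓ * Complex.exp (c * Λ ℓ) := by
  have hinv : Hm * ((N:ℂ)⁻¹ • Hmᵀ) = 1 := by
    rw [Matrix.mul_smul, hHm, smul_smul, inv_mul_cancel₀ hN, one_smul]
  have hinv' : ((N:ℂ)⁻¹ • Hmᵀ) * Hm = 1 := mul_eq_one_comm.mp hinv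
  set U : (Matrix m m ℂ)ˣ := ⟨Hm, (N:ℂ)⁻¹ • Hmᵀ, hinv, hinv'⟩ with hUdef
  have hMeq : c • M = (U : Matrix m m ℂ) * Matrix.diagonal (fun ℓ => c * Λ ℓ) *
      ((U⁻¹ : (Matrix m m ℂ)ˣ) : Matrix m m ℂ) := by
    show c • M = Hm * Matrix.diagonal (fun ℓ => c * Λ ℓ) * ((N:ℂ)⁻¹ • Hmᵀ)
    have hd : Matrix.diagonal (fun ℓ => c * Λ ℓ) = c • Matrix.diagonal Λ := by
      rw [← Matrix.diagonal_smul]; rfl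
    rw [hd, Matrix.mul_smul, Matrix.mul_smul, Matrix.smul_mul, ← hM, smul_smul, smul_smul,
      show ((N:ℂ))⁻¹ * c * (N:ℂ) = c by field_simp]
  rw [hMeq, Matrix.exp_units_conj, Matrix.exp_diagonal]
  show ((Hm * Matrix.diagonal (exp fun ℓ => c * Λ ℓ)) * ((N:ℂ)⁻¹ • Hmᵀ)) p q = _
  rw [Matrix.mul_apply, Finset.mul_sum]
  refine Finset.sum_congr rfl fun ℓ _ => ?_
  simp only [Matrix.mul_diagonal, Matrix.smul_apply, Matrix.transpose_apply, smul_eq_mul,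
    Pi.coe_exp, ← Complex.exp_eq_exp_ℂ]
  ring

private lemma castDiag {m : Type*} [Fintype m] [DecidableEq m] (N : ℤ)
    (Hm M : Matrix m m ℤ) (Λ : m → ℤ)
    (h : N • M = Hm * Matrix.diagonal Λ * Hmᵀ) :
    (N : ℂ) • M.map (fun x : ℤ => (x : ℂ)) =
      Hm.map (fun x : ℤ => (x : ℂ)) * Matrix.diagonal (fun ℓ => (Λ ℓ : ℂ)) *
        (Hm.map (fun x : ℤ => (x : ℂ)))ᵀ := by
  ext i j
  have h0 : N * M i j = ∑ k, Hm i k * Λ k * Hm j k := by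
    calc N * M i j = (N • M) i j := by simp [Matrix.smul_apply]
    _ = (Hm * Matrix.diagonal Λ * Hmᵀ) i j := by rw [h]
    _ = ∑ k, Hm i k * Λ k * Hm j k := by
        rw [Matrix.mul_apply]
        exact Finset.sum_congr rfl fun k _ => by
          rw [Matrix.mul_diagonal, Matrix.transpose_apply]
  have h1 : ((Hm.map (fun x : ℤ => (x : ℂ))) * Matrix.diagonal (fun ℓ => (Λ ℓ : ℂ)) *
      (Hm.map (fun x : ℤ => (x : ℂ)))ᵀ) i j = ∑ k, (Hm i k : ℂ) * (Λ k : ℂ) * (Hm j k : ℂ) := by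
    rw [Matrix.mul_apply]
    exact Finset.sum_congr rfl fun k _ => by
      rw [Matrix.mul_diagonal, Matrix.transpose_apply, Matrix.map_apply, Matrix.map_apply]
  rw [h1, Matrix.smul_apply, Matrix.map_apply, smul_eq_mul]
  calc (N : ℂ) * (M i j : ℂ) = ((N * M i j : ℤ) : ℂ) := by push_cast; ring
  _ = ((∑ k, Hm i k * Λ k * Hm j k : ℤ) : ℂ) := by rw [h0]
  _ = ∑ k, (Hm i k : ℂ) * (Λ k : ℂ) * (Hm j k : ℂ) := by push_cast; rfl

theorem merge_pst_all_odd_cross (n : ℕ) [NeZero n]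
    (H : Matrix (Fin n) (Fin n) ℤ)
    (hent : ∀ u v, H u v = 1 ∨ H u v = -1)
    (hH : H * Hᵀ = (n : ℤ) • 1)
    (hrow : ∀ v, H 0 v = 1) (hcol : ∀ u, H u 0 = 1)
    (L₁ A₂ : Matrix (Fin n) (Fin n) ℤ) (d₂ w₁ w₂ : ℤ)
    (Λ₁ Λ₂ : Fin n → ℤ)
    (hL₁ : (n : ℤ) • L₁ = H * Matrix.diagonal Λ₁ * Hᵀ)
    (hL₂ : (n : ℤ) • (d₂ • (1 : Matrix (Fin n) (Fin n) ℤ) - A₂) =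
      H * Matrix.diagonal Λ₂ * Hᵀ)
    (heven₁ : ∀ ℓ, Even (Λ₁ ℓ)) (heven₂ : ∀ ℓ, Even (Λ₂ ℓ))
    (hw₁ : Odd w₁) (hw₂ : Odd w₂) (hd₂ : Odd d₂)
    (L₃ : Matrix (Fin n ⊕ Fin n) (Fin n ⊕ Fin n) ℤ)
    (hL₃ : L₃ = Matrix.fromBlocks
      (w₁ • L₁ + (w₂ * d₂) • (1 : Matrix (Fin n) (Fin n) ℤ)) (-(w₂ • A₂))
      (-(w₂ • A₂)) (w₁ • L₁ + (w₂ * d₂) • (1 : Matrix (Fin n) (Fin n) ℤ)))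
    (p q : Fin n) :
    pstHalfPi L₃ (Sum.inl p) (Sum.inr q) ↔
      pstHalfPi (L₁ + (d₂ • (1 : Matrix (Fin n) (Fin n) ℤ) - A₂)) p q := by

  classical
  set ic : ℤ → ℂ := fun x => (x : ℂ) with hic
  set Hc : Matrix (Fin n) (Fin n) ℂ := H.map ic with hHcdef
  set M₁ : Matrix (Fin n) (Fin n) ℂ := L₁.map ic with hM₁def
  set L₂ : Matrix (Fin n) (Fin n) ℤ := d₂ • (1 : Matrix (Fin n) (Fin n) ℤ) - A₂ with hL₂def
  set M₂ : Matrix (Fin n) (Fin n) ℂ := L₂.map ic with hM₂def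
  set A₂c : Matrix (Fin n) (Fin n) ℂ := A₂.map ic with hA₂cdef
  have hn0 : (n : ℂ) ≠ 0 := Nat.cast_ne_zero.mpr (NeZero.ne n)
  have h2n0 : ((2 * n : ℕ) : ℂ) ≠ 0 := Nat.cast_ne_zero.mpr (by
    have := NeZero.ne n; omega)
  -- complex versions of the diagonalizations
  have h1c : (n : ℂ) • M₁ = Hc * Matrix.diagonal (fun ℓ => (Λ₁ ℓ : ℂ)) * Hcᵀ := by
    have h := castDiag (n : ℤ) H L₁ Λ₁ hL₁
    rw [Int.cast_natCast] at h
    exact h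
  have h2c : (n : ℂ) • M₂ = Hc * Matrix.diagonal (fun ℓ => (Λ₂ ℓ : ℂ)) * Hcᵀ := by
    have h := castDiag (n : ℤ) H L₂ Λ₂ hL₂
    rw [Int.cast_natCast] at h
    exact h
  have hHc : Hc * Hcᵀ = (n : ℂ) • 1 := by
    have hz : (n : ℤ) • (1 : Matrix (Fin n) (Fin n) ℤ)
        = H * Matrix.diagonal (fun _ => (1 : ℤ)) * Hᵀ := by
      rw [Matrix.diagonal_one, Matrix.mul_one, hH]
    have h := castDiag (n : ℤ) H 1 (fun _ => 1) hz
    rw [Int.cast_natCast] at h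
    have h1 : (1 : Matrix (Fin n) (Fin n) ℤ).map (fun x : ℤ => (x : ℂ)) = 1 :=
      Matrix.map_one _ (by simp) (by simp)
    have h2 : Matrix.diagonal (fun _ : Fin n => ((1 : ℤ) : ℂ)) = 1 := by
      rw [show (fun _ : Fin n => ((1 : ℤ) : ℂ)) = fun _ : Fin n => (1 : ℂ) by norm_num,
        Matrix.diagonal_one]
    rw [h1, h2, Matrix.mul_one] at h
    exact h.symm
  set B : Matrix (Fin n ⊕ Fin n) (Fin n ⊕ Fin n) ℂ := Matrix.fromBlocks Hc Hc Hc (-Hc)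
    with hBdef
  have hBc : B * Bᵀ = ((2 * n : ℕ) : ℂ) • 1 := by
    rw [hBdef, Matrix.fromBlocks_transpose, Matrix.fromBlocks_multiply,
      ← Matrix.fromBlocks_one (l := Fin n) (m := Fin n), Matrix.fromBlocks_smul]
    have hb1 : Hc * (-Hc)ᵀ = -((n : ℂ) • 1) := by
      rw [Matrix.transpose_neg, Matrix.mul_neg, hHc]
    have hb2 : (-Hc) * Hcᵀ = -((n : ℂ) • 1) := by rw [Matrix.neg_mul, hHc]
    have hb3 : (-Hc) * (-Hc)ᵀ = (n : ℂ) • 1 := by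
      rw [Matrix.transpose_neg, Matrix.mul_neg, Matrix.neg_mul, neg_neg, hHc]
    rw [hHc, hb1, hb2, hb3]
    rw [Matrix.fromBlocks_inj]
    refine ⟨?_, ?_, ?_, ?_⟩
    · match_scalars; push_cast; ring
    · rw [smul_zero]; abel
    · rw [smul_zero]; abel
    · match_scalars; push_cast; ring
  set f : Fin n → ℂ := fun ℓ => ((w₁ * Λ₁ ℓ + w₂ * Λ₂ ℓ : ℤ) : ℂ) with hfdef
  set g : Fin n → ℂ := fun ℓ => ((w₁ * Λ₁ ℓ - w₂ * Λ₂ ℓ + 2 * w₂ * d₂ : ℤ) : ℂ) with hgdef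
  have hfc : Hc * Matrix.diagonal f * Hcᵀ = ((w₁ : ℂ) * n) • M₁ + ((w₂ : ℂ) * n) • M₂ := by
    have hfD : Matrix.diagonal f = (w₁ : ℂ) • Matrix.diagonal (fun ℓ => (Λ₁ ℓ : ℂ))
        + (w₂ : ℂ) • Matrix.diagonal (fun ℓ => (Λ₂ ℓ : ℂ)) := by
      rw [← Matrix.diagonal_smul, ← Matrix.diagonal_smul, Matrix.diagonal_add]
      congr 1; funext ℓ
      simp only [hfdef, Pi.add_apply, Pi.smul_apply, smul_eq_mul]
      push_cast; ring
    rw [hfD, Matrix.mul_add, Matrix.add_mul, Matrix.mul_smul, Matrix.mul_smul,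
      Matrix.smul_mul, Matrix.smul_mul, ← h1c, ← h2c, smul_smul, smul_smul]
  have hgc : Hc * Matrix.diagonal g * Hcᵀ = ((w₁ : ℂ) * n) • M₁ - ((w₂ : ℂ) * n) • M₂
      + ((2 * w₂ * d₂ : ℤ) : ℂ) • ((n : ℂ) • 1) := by
    have hgD : Matrix.diagonal g = (w₁ : ℂ) • Matrix.diagonal (fun ℓ => (Λ₁ ℓ : ℂ))
        - (w₂ : ℂ) • Matrix.diagonal (fun ℓ => (Λ₂ ℓ : ℂ))
        + ((2 * w₂ * d₂ : ℤ) : ℂ) • (1 : Matrix (Fin n) (Fin n) ℂ) := by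
      rw [← Matrix.diagonal_one, ← Matrix.diagonal_smul, ← Matrix.diagonal_smul,
        ← Matrix.diagonal_smul, Matrix.diagonal_sub, Matrix.diagonal_add]
      congr 1; funext ℓ
      simp only [hgdef, Pi.add_apply, Pi.sub_apply, Pi.smul_apply, smul_eq_mul]
      push_cast; ring
    rw [hgD, Matrix.mul_add, Matrix.add_mul, Matrix.mul_sub, Matrix.sub_mul,
      Matrix.mul_smul, Matrix.mul_smul, Matrix.mul_smul, Matrix.smul_mul, Matrix.smul_mul,
      Matrix.smul_mul, ← h1c, ← h2c, Matrix.mul_one, hHc, smul_smul, smul_smul]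
  have mc1 : (w₁ • L₁ + (w₂ * d₂) • (1 : Matrix (Fin n) (Fin n) ℤ)).map ic
      = (w₁ : ℂ) • M₁ + ((w₂ * d₂ : ℤ) : ℂ) • 1 := by
    ext i j
    simp only [hic, hM₁def, Matrix.map_apply, Matrix.add_apply, Matrix.smul_apply,
      Matrix.one_apply, smul_eq_mul]
    by_cases h : i = j <;> simp [h] <;> push_cast <;> ring
  have mc2 : ((-(w₂ • A₂)) : Matrix (Fin n) (Fin n) ℤ).map ic = -((w₂ : ℂ) • A₂c) := by
    ext i j
    simp only [hic, hA₂cdef, Matrix.map_apply, Matrix.neg_apply, Matrix.smul_apply,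
      smul_eq_mul]
    push_cast; ring
  have mc3 : M₂ = (d₂ : ℂ) • 1 - A₂c := by
    ext i j
    simp only [hic, hM₂def, hL₂def, hA₂cdef, Matrix.map_apply, Matrix.sub_apply,
      Matrix.smul_apply, Matrix.one_apply, smul_eq_mul]
    by_cases h : i = j <;> simp [h] <;> push_cast <;> ring
  have hBig : ((2 * n : ℕ) : ℂ) • L₃.map ic = B * Matrix.diagonal (Sum.elim f g) * Bᵀ := by
    rw [hL₃, Matrix.fromBlocks_map, ← Matrix.fromBlocks_diagonal, hBdef,
      Matrix.fromBlocks_transpose, Matrix.fromBlocks_multiply, Matrix.fromBlocks_multiply,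
      Matrix.fromBlocks_smul]
    simp only [Matrix.mul_zero, Matrix.zero_mul, add_zero, zero_add,
      Matrix.transpose_neg, Matrix.mul_neg, Matrix.neg_mul, neg_neg]
    rw [mc1, mc2, Matrix.fromBlocks_inj]
    refine ⟨?_, ?_, ?_, ?_⟩ <;> rw [hfc, hgc, mc3] <;> match_scalars <;> push_cast <;> ring
  have hsumZ : (n : ℤ) • (L₁ + L₂) = H * Matrix.diagonal (fun ℓ => Λ₁ ℓ + Λ₂ ℓ) * Hᵀ := by
    rw [show Matrix.diagonal (fun ℓ => Λ₁ ℓ + Λ₂ ℓ)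
        = Matrix.diagonal Λ₁ + Matrix.diagonal Λ₂ by rw [Matrix.diagonal_add],
      Matrix.mul_add, Matrix.add_mul, ← hL₁, ← hL₂, smul_add]
  have hsum : (n : ℂ) • (L₁ + L₂).map ic
      = Hc * Matrix.diagonal (fun ℓ => ((Λ₁ ℓ + Λ₂ ℓ : ℤ) : ℂ)) * Hcᵀ := by
    have h := castDiag (n : ℤ) H (L₁ + L₂) (fun ℓ => Λ₁ ℓ + Λ₂ ℓ) hsumZ
    rw [Int.cast_natCast] at h
    exact h
  set cst : ℂ := Complex.I * ((Real.pi / 2 : ℝ) : ℂ) with hcst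
  have keyL := entryExpAux (2 * n) h2n0 B hBc (L₃.map ic) (Sum.elim f g) hBig cst
    (Sum.inl p) (Sum.inr q)
  have keyR := entryExpAux n hn0 Hc hHc ((L₁ + L₂).map ic)
    (fun ℓ => ((Λ₁ ℓ + Λ₂ ℓ : ℤ) : ℂ)) hsum cst p q
  have hptw : ∀ ℓ : Fin n,
      Hc p ℓ * Hc q ℓ * Complex.exp (cst * f ℓ)
        + Hc p ℓ * (-(Hc q ℓ)) * Complex.exp (cst * g ℓ)
      = 2 * (Hc p ℓ * Hc q ℓ * Complex.exp (cst * ((Λ₁ ℓ + Λ₂ ℓ : ℤ) : ℂ))) := by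
    intro ℓ
    obtain ⟨a, ha⟩ := heven₁ ℓ
    obtain ⟨b, hb⟩ := heven₂ ℓ
    obtain ⟨u, hu⟩ := hw₁
    obtain ⟨v, hv⟩ := hw₂
    obtain ⟨e, he⟩ := hd₂
    have e1 : Complex.exp (cst * f ℓ) = (-1 : ℂ) ^ (w₁ * a + w₂ * b) := by
      have hf1 : f ℓ = ((2 * (w₁ * a + w₂ * b) : ℤ) : ℂ) := by
        rw [hfdef]; simp only; rw [ha, hb]; push_cast; ring
      rw [hf1, hcst]; exact expHalfPi' _
    have e2 : Complex.exp (cst * g ℓ)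
        = (-1 : ℂ) ^ (w₁ * a - w₂ * b + w₂ * d₂) := by
      have hg1 : g ℓ = ((2 * (w₁ * a - w₂ * b + w₂ * d₂) : ℤ) : ℂ) := by
        rw [hgdef]; simp only; rw [ha, hb]; push_cast; ring
      rw [hg1, hcst]; exact expHalfPi' _
    have e3 : Complex.exp (cst * ((Λ₁ ℓ + Λ₂ ℓ : ℤ) : ℂ)) = (-1 : ℂ) ^ (a + b) := by
      have h3 : ((Λ₁ ℓ + Λ₂ ℓ : ℤ) : ℂ) = ((2 * (a + b) : ℤ) : ℂ) := by
        rw [ha, hb]; push_cast; ring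
      rw [h3, hcst]; exact expHalfPi' _
    rw [e1, e2, e3,
      negOnePow_even' (show Even ((w₁ * a + w₂ * b) - (a + b)) from
        ⟨u * a + v * b, by rw [hu, hv]; ring⟩),
      negOnePow_odd' (show Odd ((w₁ * a - w₂ * b + w₂ * d₂) - (a + b)) from
        ⟨u * a - v * b - b + 2 * v * e + v + e, by rw [hu, hv, he]; ring⟩)]
    ring
  have key : (NormedSpace.exp (cst • L₃.map ic)) (Sum.inl p) (Sum.inr q)
      = (NormedSpace.exp (cst • (L₁ + L₂).map ic)) p q := by
    rw [keyL, keyR, Fintype.sum_sum_type]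
    simp only [hBdef, Matrix.fromBlocks_apply₁₁, Matrix.fromBlocks_apply₁₂,
      Matrix.fromBlocks_apply₂₁, Matrix.fromBlocks_apply₂₂, Sum.elim_inl, Sum.elim_inr,
      Matrix.neg_apply]
    rw [← Finset.sum_add_distrib, Finset.sum_congr rfl (fun ℓ _ => hptw ℓ),
      ← Finset.mul_sum, ← mul_assoc,
      show ((2 * n : ℕ) : ℂ)⁻¹ * 2 = (n : ℂ)⁻¹ by
        push_cast; field_simp]
  simp only [pstHalfPi]
  rw [← hic, ← hcst, key]
end
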